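/- Let F(T) = pT + T^p + pT²G(T) with G ∈ ℤ_p[[T]] be a Lubin–Tate series for p. Then there exists a unique Witt vector w over ℤ_p[[T]], all of whose components lie in the ideal T·ℤ_p[[T]], whose n-th ghost component equals the n-fold composition F^{∘n}(T) for every n ∈ ℕ (with F^{∘0}(T) = T). -/

import Mathlib

open PowerSeries

/-- Formal composition `f ∘ g` of power series (valid when `g` has zero constant term):
the `k`-th coefficient is that of `∑_{j ≤ k} f_j g^j`. -/
noncomputable def psComp {R : Type*} [CommRing R] (f g : PowerSeries R) : PowerSeries R :=
  PowerSeries.mk fun k =>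
    PowerSeries.coeff k (∑ j ∈ Finset.range (k + 1), PowerSeries.C (PowerSeries.coeff j f) * g ^ j)

namespace LTaux

open Finset

variable {A : Type*} [CommRing A]

lemma coeff_psComp (f g : PowerSeries A) (k : ℕ) :
    coeff k (psComp f g) = ∑ j ∈ range (k + 1), coeff j f * coeff k (g ^ j) := by
  simp [psComp, coeff_mk, map_sum]

lemma coeff_pow_eq_zero {g : PowerSeries A} (hg : constantCoeff g = 0)
    {k j : ℕ} (h : k < j) : coeff k (g ^ j) = 0 := by
  have hd : (X : PowerSeries A) ^ j ∣ g ^ j := pow_dvd_pow_of_dvd (X_dvd_iff.2 hg) j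
  exact X_pow_dvd_iff.1 hd k h

lemma coeff_psComp_of_agree {f f' : PowerSeries A} (g : PowerSeries A) {k : ℕ}
    (h : ∀ j ≤ k, coeff j f = coeff j f') :
    coeff k (psComp f g) = coeff k (psComp f' g) := by
  rw [coeff_psComp, coeff_psComp]
  exact Finset.sum_congr rfl fun j hj => by
    rw [h j (Nat.lt_succ_iff.1 (mem_range.1 hj))]

lemma coeff_aeval {g : PowerSeries A} (hg : constantCoeff g = 0)
    (P : Polynomial A) (k : ℕ) :
    coeff k (Polynomial.aeval g P) = ∑ j ∈ range (k + 1), P.coeff j * coeff k (g ^ j) := by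
  have h1 : Polynomial.aeval g P = ∑ i ∈ range (max (k + 1) (P.natDegree + 1)), P.coeff i • g ^ i :=
    Polynomial.aeval_eq_sum_range' (lt_of_lt_of_le (Nat.lt_succ_self _) (le_max_right _ _)) g
  rw [h1, map_sum,
    ← Finset.sum_subset (Finset.range_subset_range.2 (le_max_left (k + 1) (P.natDegree + 1)))
      (fun j hj hj' => by
        rw [PowerSeries.coeff_smul, coeff_pow_eq_zero hg (by
          simp only [mem_range] at hj hj' ⊢; omega), smul_zero])]
  exact Finset.sum_congr rfl fun j _ => by rw [PowerSeries.coeff_smul, smul_eq_mul]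

lemma coeff_psComp_eq_aeval {g : PowerSeries A} (hg : constantCoeff g = 0)
    (f : PowerSeries A) {k N : ℕ} (hk : k < N) :
    coeff k (psComp f g) = coeff k (Polynomial.aeval g (trunc N f)) := by
  rw [coeff_psComp, coeff_aeval hg]
  refine Finset.sum_congr rfl fun j hj => ?_
  rw [coeff_trunc, if_pos (by simp only [mem_range] at hj; omega)]

lemma psComp_zero (g : PowerSeries A) : psComp 0 g = 0 := by
  ext k; simp [coeff_psComp]

lemma psComp_C (a : A) (g : PowerSeries A) : psComp (C a) g = C a := by
  ext k
  rw [coeff_psComp, Finset.sum_eq_single 0]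
  · simp [coeff_C]
  · intro j hj hj0
    simp [coeff_C, hj0]
  · intro h; simp at h

lemma psComp_one (g : PowerSeries A) : psComp 1 g = 1 := by
  have := psComp_C (1 : A) g
  rwa [map_one] at this

lemma psComp_add (f₁ f₂ g : PowerSeries A) :
    psComp (f₁ + f₂) g = psComp f₁ g + psComp f₂ g := by
  ext k
  simp [coeff_psComp, add_mul, Finset.sum_add_distrib]

lemma psComp_X_left {g : PowerSeries A} (hg : constantCoeff g = 0) :
    psComp X g = g := by
  ext k
  rw [coeff_psComp, Finset.sum_eq_single 1]
  · simp
  · intro j hj hj1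
    simp [coeff_X, hj1]
  · intro h
    simp only [mem_range, not_lt] at h
    have hk : k = 0 := by omega
    subst hk
    simp [coeff_zero_eq_constantCoeff, hg]

lemma psComp_X_right (f : PowerSeries A) : psComp f X = f := by
  ext k
  rw [coeff_psComp, Finset.sum_eq_single k]
  · rw [coeff_X_pow, if_pos rfl, mul_one]
  · intro j hj hjk
    rw [coeff_X_pow, if_neg (by omega), mul_zero]
  · intro h; simp at h

lemma constantCoeff_psComp (f g : PowerSeries A) :
    constantCoeff (psComp f g) = constantCoeff f := by
  have h0 : coeff 0 (psComp f g) = coeff 0 f := by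
    rw [coeff_psComp]; simp
  simpa [coeff_zero_eq_constantCoeff] using h0

lemma psComp_mul {g : PowerSeries A} (hg : constantCoeff g = 0) (f₁ f₂ : PowerSeries A) :
    psComp (f₁ * f₂) g = psComp f₁ g * psComp f₂ g := by
  ext k
  rw [coeff_psComp_eq_aeval hg _ (Nat.lt_succ_self k)]
  have h2 : coeff k (Polynomial.aeval g (trunc (k + 1) (f₁ * f₂)))
      = coeff k (Polynomial.aeval g (trunc (k + 1) f₁ * trunc (k + 1) f₂)) := by
    rw [coeff_aeval hg, coeff_aeval hg]
    refine Finset.sum_congr rfl fun j hj => ?_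
    have hjk : j < k + 1 := mem_range.1 hj
    congr 1
    rw [coeff_trunc, if_pos hjk, PowerSeries.coeff_mul, Polynomial.coeff_mul]
    refine Finset.sum_congr rfl fun ab hab => ?_
    have hab' := Finset.HasAntidiagonal.mem_antidiagonal.1 hab
    rw [coeff_trunc, coeff_trunc, if_pos (by omega), if_pos (by omega)]
  rw [h2, map_mul, PowerSeries.coeff_mul, PowerSeries.coeff_mul]
  refine Finset.sum_congr rfl fun ab hab => ?_
  have hab' := Finset.HasAntidiagonal.mem_antidiagonal.1 hab
  rw [← coeff_psComp_eq_aeval hg f₁ (by omega : ab.1 < k + 1),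
    ← coeff_psComp_eq_aeval hg f₂ (by omega : ab.2 < k + 1)]

lemma psComp_pow {g : PowerSeries A} (hg : constantCoeff g = 0) (f : PowerSeries A) (m : ℕ) :
    psComp (f ^ m) g = psComp f g ^ m := by
  induction m with
  | zero => simpa using psComp_one g
  | succ m ih => rw [pow_succ, psComp_mul hg, ih, pow_succ]

lemma psComp_sum {ι : Type*} (s : Finset ι) (f : ι → PowerSeries A) (g : PowerSeries A) :
    psComp (∑ i ∈ s, f i) g = ∑ i ∈ s, psComp (f i) g := by
  classical
  induction s using Finset.induction_on with
  | empty => simpa using psComp_zero g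
  | insert _ _ hx ih =>
    rw [Finset.sum_insert hx, Finset.sum_insert hx, psComp_add, ih]

lemma psComp_assoc {f g h : PowerSeries A} (hg : constantCoeff g = 0)
    (hh : constantCoeff h = 0) :
    psComp (psComp f g) h = psComp f (psComp g h) := by
  ext k
  have agree : ∀ j ≤ k, coeff j (psComp f g)
      = coeff j (∑ i ∈ range (k + 1), C (coeff i f) * g ^ i) := by
    intro j hj
    rw [coeff_psComp, map_sum]
    rw [Finset.sum_subset (Finset.range_subset_range.2 (by omega : j + 1 ≤ k + 1))
      (fun i hi hi' => by
        rw [coeff_pow_eq_zero hg (by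
          simp only [mem_range] at hi hi' ⊢; omega), mul_zero])]
    exact Finset.sum_congr rfl fun i _ => by rw [coeff_C_mul]
  rw [coeff_psComp_of_agree h agree, psComp_sum]
  have step : ∀ i, psComp (C (coeff i f) * g ^ i) h
      = C (coeff i f) * psComp g h ^ i := fun i => by
    rw [psComp_mul hh, psComp_C, psComp_pow hh]
  rw [Finset.sum_congr rfl fun i _ => step i, coeff_psComp, map_sum]
  exact Finset.sum_congr rfl fun i _ => by rw [coeff_C_mul]

lemma map_psComp {B : Type*} [CommRing B] (σ : A →+* B) (f g : PowerSeries A) :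
    PowerSeries.map σ (psComp f g) = psComp (PowerSeries.map σ f) (PowerSeries.map σ g) := by
  ext k
  rw [PowerSeries.coeff_map, coeff_psComp, coeff_psComp, map_sum]
  exact Finset.sum_congr rfl fun j _ => by
    rw [map_mul, PowerSeries.coeff_map, ← map_pow, PowerSeries.coeff_map]

lemma C_dvd_iff {a : A} {f : PowerSeries A} :
    C a ∣ f ↔ ∀ n, a ∣ coeff n f := by
  constructor
  · rintro ⟨g, rfl⟩ n
    exact ⟨coeff n g, by rw [coeff_C_mul]⟩
  · intro h
    refine ⟨PowerSeries.mk fun n => (h n).choose, ?_⟩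
    ext n
    rw [coeff_C_mul, coeff_mk]
    exact (h n).choose_spec

lemma coeff_pow_of_agree {u v : PowerSeries A} {k : ℕ} (m : ℕ)
    (h : ∀ j ≤ k, coeff j u = coeff j v) :
    ∀ j ≤ k, coeff j (u ^ m) = coeff j (v ^ m) := by
  induction m with
  | zero => intro j _; rfl
  | succ m ih =>
    intro j hj
    rw [pow_succ, pow_succ, PowerSeries.coeff_mul, PowerSeries.coeff_mul]
    refine Finset.sum_congr rfl fun ab hab => ?_
    have hab' := Finset.HasAntidiagonal.mem_antidiagonal.1 hab
    rw [ih ab.1 (by omega), h ab.2 (by omega)]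

lemma psComp_X_pow_p (p : ℕ) [Fact p.Prime] (h : PowerSeries (ZMod p)) :
    psComp h ((X : PowerSeries (ZMod p)) ^ p) = h ^ p := by
  have hp : 0 < p := (Fact.out : p.Prime).pos
  ext k
  have hR : coeff k (h ^ p) = if p ∣ k then coeff (k / p) h else 0 := by
    have hagree : ∀ j ≤ k, coeff j h
        = coeff j ((trunc (k + 1) h : Polynomial (ZMod p)) : PowerSeries (ZMod p)) := by
      intro j hj
      rw [Polynomial.coeff_coe, coeff_trunc, if_pos (by omega)]
    rw [coeff_pow_of_agree p hagree k le_rfl, ← Polynomial.coe_pow]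
    have hexp : (trunc (k + 1) h) ^ p = Polynomial.expand (ZMod p) p (trunc (k + 1) h) := by
      rw [← Polynomial.map_frobenius_expand, ZMod.frobenius_zmod, Polynomial.map_id]
    rw [hexp, Polynomial.coeff_coe, Polynomial.coeff_expand hp]
    split
    · rw [coeff_trunc, if_pos (Nat.lt_succ_of_le (Nat.div_le_self k p))]
    · rfl
  rw [hR, coeff_psComp]
  by_cases hd : p ∣ k
  · obtain ⟨m, rfl⟩ := hd
    rw [if_pos ⟨m, rfl⟩, Finset.sum_eq_single m]
    · rw [← pow_mul, coeff_X_pow, if_pos rfl, mul_one, Nat.mul_div_cancel_left m hp]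
    · intro j hj hjm
      rw [← pow_mul, coeff_X_pow, if_neg (by
        intro hc
        exact hjm (Nat.eq_of_mul_eq_mul_left hp hc.symm)), mul_zero]
    · intro hm
      exfalso
      apply hm
      simp only [mem_range]
      calc m ≤ p * m := Nat.le_mul_of_pos_left m hp
      _ < p * m + 1 := Nat.lt_succ_self _
  · rw [if_neg hd]
    refine Finset.sum_eq_zero fun j hj => ?_
    rw [← pow_mul, coeff_X_pow, if_neg (fun hc => hd ⟨j, hc⟩), mul_zero]

lemma pow_succ_dvd_pow_sub_pow (p : ℕ) [Fact p.Prime] (u v : A) (k : ℕ)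
    (h : ((p : A)) ^ (k + 1) ∣ u - v) : ((p : A)) ^ (k + 2) ∣ u ^ p - v ^ p := by
  have h1 : (p : A) ∣ u - v := (dvd_pow_self (p : A) (Nat.succ_ne_zero k)).trans h
  have hs : (p : A) ∣ ∑ i ∈ range p, u ^ i * v ^ (p - 1 - i) := by
    have hiv : ∀ i ∈ range p, u ^ i * v ^ (p - 1 - i)
        = (u ^ i - v ^ i) * v ^ (p - 1 - i) + v ^ (p - 1) := by
      intro i hi
      have hie : i + (p - 1 - i) = p - 1 := by
        have := mem_range.1 hi
        have := (Fact.out : p.Prime).pos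
        omega
      rw [sub_mul, ← pow_add, hie]
      ring
    rw [Finset.sum_congr rfl hiv, Finset.sum_add_distrib, Finset.sum_const, card_range,
      nsmul_eq_mul]
    exact dvd_add
      (Finset.dvd_sum fun i _ =>
        dvd_mul_of_dvd_left (h1.trans (sub_dvd_pow_sub_pow u v i)) _)
      (dvd_mul_right _ _)
  have hg := geom_sum₂_mul u v p
  calc ((p : A)) ^ (k + 2) = (p : A) * ((p : A)) ^ (k + 1) := by ring
  _ ∣ (∑ i ∈ range p, u ^ i * v ^ (p - 1 - i)) * (u - v) := mul_dvd_mul hs h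
  _ = u ^ p - v ^ p := hg

lemma C_dvd_psComp_sub (G : PowerSeries A) {c : A} {u v : PowerSeries A}
    (h : C c ∣ u - v) : C c ∣ psComp G u - psComp G v := by
  have hpow : ∀ j : ℕ, C c ∣ u ^ j - v ^ j := fun j => h.trans (sub_dvd_pow_sub_pow u v j)
  rw [C_dvd_iff]
  intro n
  rw [map_sub, coeff_psComp, coeff_psComp, ← Finset.sum_sub_distrib]
  refine Finset.dvd_sum fun j _ => ?_
  rw [← mul_sub]
  refine Dvd.dvd.mul_left ?_ _
  have hj := C_dvd_iff.1 (hpow j) n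
  rwa [map_sub] at hj

variable (p : ℕ) [hp : Fact p.Prime]

lemma padic_dvd_iff (c : ℤ_[p]) : (p : ℤ_[p]) ∣ c ↔ PadicInt.toZMod c = 0 := by
  rw [← RingHom.mem_ker, PadicInt.ker_toZMod, PadicInt.maximalIdeal_eq_span_p,
    Ideal.mem_span_singleton]

lemma frob (f : PowerSeries ℤ_[p]) :
    (p : PowerSeries ℤ_[p]) ∣ psComp f ((X : PowerSeries ℤ_[p]) ^ p) - f ^ p := by
  have hC : (p : PowerSeries ℤ_[p]) = C (p : ℤ_[p]) := (map_natCast (C (R := ℤ_[p])) p).symm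
  rw [hC, C_dvd_iff]
  intro n
  rw [padic_dvd_iff]
  have hmap : PowerSeries.map (PadicInt.toZMod (p := p))
      (psComp f ((X : PowerSeries ℤ_[p]) ^ p) - f ^ p) = 0 := by
    rw [map_sub, map_psComp, map_pow, map_pow, PowerSeries.map_X, psComp_X_pow_p, sub_self]
  have hcoe := congrArg (coeff n) hmap
  rwa [PowerSeries.coeff_map, map_zero] at hcoe

end LTaux

theorem lubinTate_wittVector_exists_unique (p : ℕ) [Fact p.Prime]
    (G : PowerSeries ℤ_[p])
    (F : PowerSeries ℤ_[p])
    (hF : F = PowerSeries.C (p : ℤ_[p]) * PowerSeries.X + PowerSeries.X ^ p +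
      PowerSeries.C (p : ℤ_[p]) * PowerSeries.X ^ 2 * G) :
    ∃! w : WittVector p (PowerSeries ℤ_[p]),
      (∀ n : ℕ, w.coeff n ∈ Ideal.span ({PowerSeries.X} : Set (PowerSeries ℤ_[p]))) ∧
      (∀ n : ℕ, WittVector.ghostComponent n w =
        (fun g => psComp g F)^[n] PowerSeries.X) := by
  classical
  have hppos : 0 < p := (Fact.out : p.Prime).pos
  have hpne : p ≠ 0 := hppos.ne'
  set x : ℕ → PowerSeries ℤ_[p] :=
    fun n => (fun g => psComp g F)^[n] (X : PowerSeries ℤ_[p]) with hxdef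
  have hx0 : x 0 = X := rfl
  have hxs : ∀ n, x (n + 1) = psComp (x n) F := fun n => Function.iterate_succ_apply' _ _ _
  have hccF : constantCoeff F = 0 := by
    rw [hF]
    simp [zero_pow hpne]
  have hccXp : constantCoeff ((X : PowerSeries ℤ_[p]) ^ p) = 0 := by
    simp [zero_pow hpne]
  have hccx : ∀ n, constantCoeff (x n) = 0 := by
    intro n
    induction n with
    | zero => rw [hx0]; exact constantCoeff_X
    | succ n ih => rw [hxs, LTaux.constantCoeff_psComp]; exact ih
  have hxs' : ∀ n, x (n + 1) = psComp F (x n) := by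
    intro n
    induction n with
    | zero => rw [hxs 0, hx0, LTaux.psComp_X_left hccF, LTaux.psComp_X_right]
    | succ n ih =>
      rw [hxs (n + 1), ih, LTaux.psComp_assoc (hccx n) hccF, ← hxs n, ← ih]
  have hCp : (p : PowerSeries ℤ_[p]) = C (p : ℤ_[p]) := (map_natCast (C (R := ℤ_[p])) p).symm
  have hCpi : ∀ i : ℕ, (p : PowerSeries ℤ_[p]) ^ i = C ((p : ℤ_[p]) ^ i) := fun i => by
    rw [hCp, map_pow]
  have hFw : ∀ w : PowerSeries ℤ_[p], constantCoeff w = 0 →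
      psComp F w = (p : PowerSeries ℤ_[p]) * w + w ^ p
        + (p : PowerSeries ℤ_[p]) * w ^ 2 * psComp G w := by
    intro w hw
    simp only [hF, LTaux.psComp_add, LTaux.psComp_mul hw, LTaux.psComp_pow hw,
      LTaux.psComp_C, LTaux.psComp_X_left hw, hCp]
  have dwork : ∀ n, (p : PowerSeries ℤ_[p]) ^ (n + 1)
      ∣ x (n + 1) - psComp (x n) ((X : PowerSeries ℤ_[p]) ^ p) := by
    intro n
    induction n with
    | zero =>
      rw [hxs 0, hx0, LTaux.psComp_X_left hccF, LTaux.psComp_X_left hccXp, pow_one]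
      refine ⟨X + X ^ 2 * G, ?_⟩
      rw [hF, hCp]
      ring
    | succ n ih =>
      have h1 : x (n + 2) = psComp F (x (n + 1)) := hxs' (n + 1)
      have h2 : psComp (x (n + 1)) ((X : PowerSeries ℤ_[p]) ^ p)
          = psComp F (psComp (x n) ((X : PowerSeries ℤ_[p]) ^ p)) := by
        rw [hxs' n, LTaux.psComp_assoc (hccx n) hccXp]
      set u := x (n + 1) with hu
      set v := psComp (x n) ((X : PowerSeries ℤ_[p]) ^ p) with hv
      have hcu : constantCoeff u = 0 := hccx _
      have hcv : constantCoeff v = 0 := by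
        rw [hv, LTaux.constantCoeff_psComp]; exact hccx n
      rw [h1, h2, hFw u hcu, hFw v hcv]
      have hdecomp : (p : PowerSeries ℤ_[p]) * u + u ^ p
            + (p : PowerSeries ℤ_[p]) * u ^ 2 * psComp G u
          - ((p : PowerSeries ℤ_[p]) * v + v ^ p
            + (p : PowerSeries ℤ_[p]) * v ^ 2 * psComp G v)
          = (p : PowerSeries ℤ_[p]) * (u - v) + (u ^ p - v ^ p)
            + (p : PowerSeries ℤ_[p]) * (u ^ 2 * psComp G u - v ^ 2 * psComp G v) := by
        ring
      rw [hdecomp]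
      have hpow2 : ((p : PowerSeries ℤ_[p])) ^ (n + 2)
          = (p : PowerSeries ℤ_[p]) * ((p : PowerSeries ℤ_[p])) ^ (n + 1) := by ring
      refine dvd_add (dvd_add ?_ ?_) ?_
      · rw [hpow2]
        exact mul_dvd_mul_left _ ih
      · exact LTaux.pow_succ_dvd_pow_sub_pow p u v n ih
      · have h3 : ((p : PowerSeries ℤ_[p])) ^ (n + 1)
            ∣ u ^ 2 * psComp G u - v ^ 2 * psComp G v := by
          have hdec2 : u ^ 2 * psComp G u - v ^ 2 * psComp G v
              = (u ^ 2 - v ^ 2) * psComp G u + v ^ 2 * (psComp G u - psComp G v) := by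
            ring
          rw [hdec2]
          refine dvd_add (Dvd.dvd.mul_right (ih.trans (sub_dvd_pow_sub_pow u v 2)) _)
            (Dvd.dvd.mul_left ?_ _)
          rw [hCpi (n + 1)] at ih ⊢
          exact LTaux.C_dvd_psComp_sub G ih
        rw [hpow2]
        exact mul_dvd_mul_left _ h3
  have hpR : ∀ i : ℕ, ((p : PowerSeries ℤ_[p])) ^ i ≠ 0 := by
    intro i
    apply pow_ne_zero
    intro hzero
    have hcc := congrArg (constantCoeff (R := ℤ_[p])) hzero
    rw [map_natCast, map_zero] at hcc
    exact (Nat.cast_ne_zero.2 hpne : (p : ℤ_[p]) ≠ 0) hcc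
  -- uniqueness of solutions of the ghost equations
  have U : ∀ (a b : ℕ → PowerSeries ℤ_[p]) (N : ℕ),
      (∀ m ≤ N, ∑ i ∈ Finset.range (m + 1), (p : PowerSeries ℤ_[p]) ^ i * a i ^ p ^ (m - i)
        = ∑ i ∈ Finset.range (m + 1), (p : PowerSeries ℤ_[p]) ^ i * b i ^ p ^ (m - i)) →
      ∀ i ≤ N, a i = b i := by
    intro a b N hSab i
    induction i using Nat.strong_induction_on with
    | _ i ih =>
      intro hiN
      have h1 := hSab i hiN
      rw [Finset.sum_range_succ, Finset.sum_range_succ] at h1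
      have h2 : ∑ j ∈ Finset.range i, (p : PowerSeries ℤ_[p]) ^ j * a j ^ p ^ (i - j)
          = ∑ j ∈ Finset.range i, (p : PowerSeries ℤ_[p]) ^ j * b j ^ p ^ (i - j) :=
        Finset.sum_congr rfl fun j hj => by
          rw [ih j (Finset.mem_range.1 hj)
            (le_trans (le_of_lt (Finset.mem_range.1 hj)) hiN)]
      rw [h2] at h1
      have h3 := add_left_cancel h1
      have h4 := mul_left_cancel₀ (hpR i) h3
      simpa using h4
  -- existence of partial solutions
  have E : ∀ n, ∃ a : ℕ → PowerSeries ℤ_[p],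
      (∀ i, constantCoeff (a i) = 0) ∧
      ∀ m ≤ n, ∑ i ∈ Finset.range (m + 1), (p : PowerSeries ℤ_[p]) ^ i * a i ^ p ^ (m - i)
        = x m := by
    intro n
    induction n with
    | zero =>
      refine ⟨fun _ => X, fun _ => constantCoeff_X, ?_⟩
      intro m hm
      have hm0 : m = 0 := Nat.le_zero.1 hm
      subst hm0
      simp [hx0]
    | succ n ih =>
      obtain ⟨a, ha0, haS⟩ := ih
      have key : (p : PowerSeries ℤ_[p]) ^ (n + 1) ∣ x (n + 1)
          - ∑ i ∈ Finset.range (n + 1), (p : PowerSeries ℤ_[p]) ^ i * a i ^ p ^ (n + 1 - i) := by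
        have hpsi : psComp (x n) ((X : PowerSeries ℤ_[p]) ^ p)
            = ∑ i ∈ Finset.range (n + 1),
                (p : PowerSeries ℤ_[p]) ^ i
                  * psComp (a i) ((X : PowerSeries ℤ_[p]) ^ p) ^ p ^ (n - i) := by
          rw [← haS n le_rfl, LTaux.psComp_sum]
          refine Finset.sum_congr rfl fun i _ => ?_
          rw [hCpi i, LTaux.psComp_mul hccXp, LTaux.psComp_C, LTaux.psComp_pow hccXp]
        have hterm : ∀ i ∈ Finset.range (n + 1),
            (p : PowerSeries ℤ_[p]) ^ (n + 1)
              ∣ (p : PowerSeries ℤ_[p]) ^ i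
                  * psComp (a i) ((X : PowerSeries ℤ_[p]) ^ p) ^ p ^ (n - i)
                - (p : PowerSeries ℤ_[p]) ^ i * a i ^ p ^ (n + 1 - i) := by
          intro i hi
          have hi' : i ≤ n := Nat.lt_succ_iff.1 (Finset.mem_range.1 hi)
          have hd : (p : PowerSeries ℤ_[p]) ^ (n - i + 1)
              ∣ psComp (a i) ((X : PowerSeries ℤ_[p]) ^ p) ^ p ^ (n - i)
                - (a i ^ p) ^ p ^ (n - i) :=
            dvd_sub_pow_of_dvd_sub (LTaux.frob p (a i)) (n - i)
          have hrw : (a i ^ p) ^ p ^ (n - i) = a i ^ p ^ (n + 1 - i) := by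
            rw [← pow_mul, ← pow_succ']
            congr 2
            omega
          rw [← hrw, ← mul_sub]
          have hsplit : (p : PowerSeries ℤ_[p]) ^ (n + 1)
              = (p : PowerSeries ℤ_[p]) ^ i * (p : PowerSeries ℤ_[p]) ^ (n - i + 1) := by
            rw [← pow_add]
            congr 1
            omega
          rw [hsplit]
          exact mul_dvd_mul_left _ hd
        have hsum : (p : PowerSeries ℤ_[p]) ^ (n + 1)
            ∣ psComp (x n) ((X : PowerSeries ℤ_[p]) ^ p)
              - ∑ i ∈ Finset.range (n + 1),
                  (p : PowerSeries ℤ_[p]) ^ i * a i ^ p ^ (n + 1 - i) := by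
          rw [hpsi, ← Finset.sum_sub_distrib]
          exact Finset.dvd_sum hterm
        have hadd := dvd_add (dwork n) hsum
        rwa [sub_add_sub_cancel] at hadd
      obtain ⟨t, ht⟩ := key
      have hcct : constantCoeff t = 0 := by
        have h0 := congrArg (constantCoeff (R := ℤ_[p])) ht
        have hS0 : ∀ i ∈ Finset.range (n + 1),
            constantCoeff
              ((p : PowerSeries ℤ_[p]) ^ i * a i ^ p ^ (n + 1 - i)) = 0 := by
          intro i _
          rw [map_mul, map_pow, map_pow, ha0 i, zero_pow (Nat.pow_pos hppos).ne', mul_zero]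
        rw [map_sub, map_sum, Finset.sum_eq_zero hS0, hccx (n + 1), sub_zero,
          map_mul, map_pow, map_natCast] at h0
        have hpz : ((p : ℤ_[p])) ^ (n + 1) ≠ 0 :=
          pow_ne_zero _ (Nat.cast_ne_zero.2 hpne)
        rcases mul_eq_zero.1 h0.symm with h | h
        · exact absurd h hpz
        · exact h
      refine ⟨Function.update a (n + 1) t, ?_, ?_⟩
      · intro i
        by_cases hi : i = n + 1
        · subst hi; rw [Function.update_self]; exact hcct
        · rw [Function.update_of_ne hi]; exact ha0 i
      · intro m hm
        by_cases hmn : m ≤ n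
        · have hupd : ∑ i ∈ Finset.range (m + 1),
              (p : PowerSeries ℤ_[p]) ^ i * (Function.update a (n + 1) t) i ^ p ^ (m - i)
              = ∑ i ∈ Finset.range (m + 1),
                (p : PowerSeries ℤ_[p]) ^ i * a i ^ p ^ (m - i) := by
            refine Finset.sum_congr rfl fun i hi => ?_
            rw [Function.update_of_ne (by
              have := Finset.mem_range.1 hi; omega)]
          rw [hupd]
          exact haS m hmn
        · have hm1 : m = n + 1 := by omega
          subst hm1
          rw [Finset.sum_range_succ]
          have hupd : ∑ i ∈ Finset.range (n + 1),
              (p : PowerSeries ℤ_[p]) ^ i * (Function.update a (n + 1) t) i ^ p ^ (n + 1 - i)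
              = ∑ i ∈ Finset.range (n + 1),
                (p : PowerSeries ℤ_[p]) ^ i * a i ^ p ^ (n + 1 - i) := by
            refine Finset.sum_congr rfl fun i hi => ?_
            rw [Function.update_of_ne (by
              have := Finset.mem_range.1 hi; omega)]
          rw [hupd, Function.update_self, Nat.sub_self, pow_zero, pow_one]
          linear_combination -ht
  -- assemble the global coefficient sequence
  set a : ℕ → PowerSeries ℤ_[p] := fun n => (E n).choose n with hadef
  have hS : ∀ m, ∑ i ∈ Finset.range (m + 1),
      (p : PowerSeries ℤ_[p]) ^ i * a i ^ p ^ (m - i) = x m := by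
    intro m
    obtain ⟨hb0, hbS⟩ := (E m).choose_spec
    have hagree : ∀ i, i ≤ m → a i = (E m).choose i := by
      intro i hi
      have hcS := (E i).choose_spec.2
      exact U (E i).choose (E m).choose i
        (fun m' hm' => by rw [hcS m' hm', hbS m' (le_trans hm' hi)]) i le_rfl
    have hsum : ∑ i ∈ Finset.range (m + 1),
        (p : PowerSeries ℤ_[p]) ^ i * a i ^ p ^ (m - i)
        = ∑ i ∈ Finset.range (m + 1),
          (p : PowerSeries ℤ_[p]) ^ i * (E m).choose i ^ p ^ (m - i) :=
      Finset.sum_congr rfl fun i hi => by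
        rw [hagree i (Nat.lt_succ_iff.1 (Finset.mem_range.1 hi))]
    rw [hsum]
    exact hbS m le_rfl
  have ha0 : ∀ n, constantCoeff (a n) = 0 := fun n => (E n).choose_spec.1 n
  refine ⟨WittVector.mk p a, ⟨?_, ?_⟩, ?_⟩
  · intro n
    have : (WittVector.mk p a).coeff n = a n := by rw [WittVector.coeff_mk]
    rw [this]
    exact Ideal.mem_span_singleton.2 (X_dvd_iff.2 (ha0 n))
  · intro n
    rw [WittVector.ghostComponent_apply, aeval_wittPolynomial, WittVector.coeff_mk]
    exact hS n
  · rintro w' ⟨hmem', hg'⟩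
    apply WittVector.ext
    intro n
    have hw'S : ∀ m, ∑ i ∈ Finset.range (m + 1),
        (p : PowerSeries ℤ_[p]) ^ i * w'.coeff i ^ p ^ (m - i) = x m := by
      intro m
      have hgm := hg' m
      rwa [WittVector.ghostComponent_apply, aeval_wittPolynomial] at hgm
    have hcoeff := U w'.coeff a n (fun m' _ => by rw [hw'S m', hS m']) n le_rfl
    rw [hcoeff, WittVector.coeff_mk]
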